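/- Let X, Z, V, Y be finite sets and p_{Y|X,Z,V} a conditional probability distribution from X × Z × V to Y. Define W : X → DCCone(Y) by W(x) := ⋃_{z∈Z} {a ∈ ℝ^Y : Σ_{y∈Y} p_{Y|X,Z,V}(y|x,z,v) a(y) ≤ 0 for every v ∈ V}. Then for all positive integers n, L and every 0 < ε < 1, the channel coding game (W, n, L, ε) is a guaranteed win if and only if there exists an AVCF coding scheme for p_{Y|X,Z,V} with blocklength n, message cardinality L and maximum error probability at most ε. -/

import Mathlib

open scoped BigOperators

noncomputable section

/-- The prefix `y^{i-1} = (y_0, …, y_{i-1})` of `y : Fin n → Y`, i.e. the first `i` entries. -/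
def prefixOf {Y : Type*} {n : ℕ} (y : Fin n → Y) (i : Fin n) : Fin i.1 → Y :=
  fun j => y ⟨j.1, j.2.trans i.2⟩

/-- `A ⊆ ℝ^Y` is a pricing downward closed (DC) cone. -/
def IsDCCone {Y : Type*} (A : Set (Y → ℝ)) : Prop :=
  (∀ a ∈ A, ∀ γ : ℝ, 0 ≤ γ → γ • a ∈ A) ∧
  (∀ a ∈ A, ∀ b : Y → ℝ, (∀ y, 0 ≤ b y) → a - b ∈ A)

/-- The channel coding game `(W, n, L, ε)` is a guaranteed win. -/
def GuaranteedWin {X Y : Type*} (W : X → Set (Y → ℝ)) (n L : ℕ) (ε : ℝ) : Prop :=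
  ∃ (x : Fin L → Fin n → X)
    (w : (i : Fin n) → Fin L → (Fin i.1 → Y) → (Y → ℝ))
    (dec : (Fin n → Y) → Fin L),
    (∀ (i : Fin n) (m : Fin L) (ypre : Fin i.1 → Y), w i m ypre ∈ W (x m i)) ∧
    (∀ (m : Fin L) (y : Fin n → Y),
      (∑ i, w i m (prefixOf y i) (y i)) - (if dec y = m then 0 else 1) ≥ -ε)

namespace AVCFaux

def mycons {Y : Type*} {k : ℕ} (a : Y) (f : Fin k → Y) : Fin (k + 1) → Y :=
  fun i => if h : i.1 = 0 then a else f ⟨i.1 - 1, by have := i.2; omega⟩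

variable {Y : Type*}

lemma mycons_zero {k : ℕ} (a : Y) (f : Fin k → Y) : mycons a f 0 = a := by
  simp [mycons]

lemma mycons_succ {k : ℕ} (a : Y) (f : Fin k → Y) (j : Fin k) :
    mycons a f j.succ = f j := by
  simp only [mycons, Fin.val_succ]
  rw [dif_neg (by omega)]
  exact congrArg f (Fin.ext (by simp))

lemma prefixOf_mycons_succ {k : ℕ} (a : Y) (t : Fin k → Y) (j : Fin k) :
    prefixOf (mycons a t) j.succ = mycons a (prefixOf t j) := by
  funext i
  show (mycons a t) ⟨i.1, _⟩ = mycons a (prefixOf t j) i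
  by_cases h : i.1 = 0
  · simp [mycons, h]
  · simp only [mycons, h, dif_neg, prefixOf]

def consEquiv' (Y : Type*) (k : ℕ) : Y × (Fin k → Y) ≃ (Fin (k + 1) → Y) where
  toFun p := mycons p.1 p.2
  invFun y := (y 0, fun j => y j.succ)
  left_inv p := by
    refine Prod.ext ?_ ?_
    · exact mycons_zero p.1 p.2
    · funext j
      exact mycons_succ p.1 p.2 j
  right_inv y := by
    funext i
    by_cases h : i.1 = 0
    · simp only [mycons, h, dif_pos]
      exact congrArg y (Fin.ext (by simp [h])).symm
    · simp only [mycons, h, dif_neg]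
      exact congrArg y (Fin.ext (by simp; omega))

lemma lemA {Y : Type*} [Fintype Y] :
    ∀ (n : ℕ) (g w : (i : Fin n) → (Fin i.1 → Y) → Y → ℝ) (h : (Fin n → Y) → ℝ) (c : ℝ),
      (∀ i pref y, 0 ≤ g i pref y) →
      (∀ i pref, ∑ y, g i pref y = 1) →
      (∀ i pref, ∑ y, g i pref y * w i pref y ≤ 0) →
      (∀ y, h y ≤ (∑ i, w i (prefixOf y i) (y i)) + c) →
      (∑ y : Fin n → Y, (∏ i, g i (prefixOf y i) (y i)) * h y) ≤ c := by
  intro n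
  induction n with
  | zero =>
    intro g w h c hg hsum hcone hh
    rw [Fintype.sum_unique]
    simpa using hh default
  | succ n ih =>
    intro g w h c hg hsum hcone hh
    by_cases hY : IsEmpty Y
    · exfalso
      have h1 := hsum 0 (fun k => absurd k.2 (by simp))
      rw [Finset.univ_eq_empty, Finset.sum_empty] at h1
      norm_num at h1
    · haveI : Nonempty Y := not_isEmpty_iff.mp hY
      obtain ⟨y0⟩ := ‹Nonempty Y›
      set pre0 : Fin ((0 : Fin (n + 1)).val) → Y := fun _ => y0 with hpre0def
      have hpre0 : ∀ q : Fin ((0 : Fin (n + 1)).val) → Y, q = pre0 := by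
        intro q; funext k
        exact absurd k.2 (by simp)
      calc ∑ y : Fin (n + 1) → Y, (∏ i, g i (prefixOf y i) (y i)) * h y
          = ∑ q : Y × (Fin n → Y),
              (∏ i, g i (prefixOf (mycons q.1 q.2) i) ((mycons q.1 q.2) i)) * h (mycons q.1 q.2) :=
            (Equiv.sum_comp (consEquiv' Y n)
              (fun y : Fin (n + 1) → Y => (∏ i, g i (prefixOf y i) (y i)) * h y)).symm
        _ = ∑ a : Y, ∑ t : Fin n → Y,
              (∏ i, g i (prefixOf (mycons a t) i) ((mycons a t) i)) * h (mycons a t) := by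
            rw [Fintype.sum_prod_type]
        _ = ∑ a : Y, g 0 pre0 a *
              ∑ t : Fin n → Y,
                (∏ j : Fin n, g j.succ (mycons a (prefixOf t j)) (t j)) * h (mycons a t) := by
            refine Finset.sum_congr rfl fun a _ => ?_
            rw [Finset.mul_sum]
            refine Finset.sum_congr rfl fun t _ => ?_
            rw [Fin.prod_univ_succ, hpre0 (prefixOf (mycons a t) 0), mycons_zero,
              Finset.prod_congr rfl
                (fun j _ => by rw [prefixOf_mycons_succ, mycons_succ] :
                  ∀ j ∈ Finset.univ,
                    g j.succ (prefixOf (mycons a t) j.succ) ((mycons a t) j.succ)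
                      = g j.succ (mycons a (prefixOf t j)) (t j))]
            ring
        _ ≤ ∑ a : Y, g 0 pre0 a * (c + w 0 pre0 a) := by
            refine Finset.sum_le_sum fun a _ => ?_
            refine mul_le_mul_of_nonneg_left ?_ (hg 0 pre0 a)
            refine ih (fun j pref => g j.succ (mycons a pref))
              (fun j pref => w j.succ (mycons a pref))
              (fun t => h (mycons a t)) (c + w 0 pre0 a)
              (fun j pref y => hg _ _ _) (fun j pref => hsum _ _) (fun j pref => hcone _ _)
              (fun t => ?_)
            have h1 := hh (mycons a t)
            rw [Fin.sum_univ_succ, hpre0 (prefixOf (mycons a t) 0), mycons_zero] at h1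
            have h2 : ∀ j : Fin n,
                w j.succ (prefixOf (mycons a t) j.succ) ((mycons a t) j.succ)
                  = w j.succ (mycons a (prefixOf t j)) (t j) := fun j => by
              rw [prefixOf_mycons_succ, mycons_succ]
            rw [Finset.sum_congr rfl (fun j _ => h2 j)] at h1
            linarith
        _ = c * (∑ a, g 0 pre0 a) + ∑ a, g 0 pre0 a * w 0 pre0 a := by
            rw [Finset.mul_sum, ← Finset.sum_add_distrib]
            refine Finset.sum_congr rfl fun a _ => ?_
            ring
        _ ≤ c := by
            rw [hsum 0 pre0]
            have := hcone 0 pre0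
            linarith

lemma lemA' {Y : Type*} [Fintype Y]
    (n : ℕ) (g w : (i : Fin n) → (Fin i.1 → Y) → Y → ℝ) (h : (Fin n → Y) → ℝ) (c : ℝ)
    (hg : ∀ i pref y, 0 ≤ g i pref y)
    (hsum : ∀ i pref, ∑ y, g i pref y = 1)
    (hcone : ∀ i pref, 0 ≤ ∑ y, g i pref y * w i pref y)
    (hh : ∀ y, (∑ i, w i (prefixOf y i) (y i)) + c ≤ h y) :
    c ≤ ∑ y : Fin n → Y, (∏ i, g i (prefixOf y i) (y i)) * h y := by
  have := lemA n g (fun i pref y => -(w i pref y)) (fun y => -(h y)) (-c) hg hsum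
    (fun i pref => by
      have := hcone i pref
      simp only [mul_neg, Finset.sum_neg_distrib]
      linarith)
    (fun y => by
      have := hh y
      simp only [Finset.sum_neg_distrib]
      linarith)
  simp only [mul_neg, Finset.sum_neg_distrib] at this
  linarith

section Q

variable {X Z V : Type*} [Fintype Y] [Fintype V]

def qfun (p : X → Z → V → Y → ℝ) {n : ℕ} (x : Fin n → X)
    (z : (i : Fin n) → (Fin i.1 → Y) → Z) (e : (Fin n → Y) → ℝ) : ℕ → (Fin n → Y) → ℝ
  | 0 => e
  | (d + 1) => fun y =>
      if hd : d < n then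
        ⨆ v : V, ∑ c : Y,
          p (x ⟨n - 1 - d, by omega⟩) (z ⟨n - 1 - d, by omega⟩ (prefixOf y ⟨n - 1 - d, by omega⟩)) v c
            * qfun p x z e d (Function.update y ⟨n - 1 - d, by omega⟩ c)
      else qfun p x z e d y

variable (p : X → Z → V → Y → ℝ) {n : ℕ} (x : Fin n → X)
  (z : (i : Fin n) → (Fin i.1 → Y) → Z) (e : (Fin n → Y) → ℝ)

lemma qfun_congr : ∀ (d : ℕ) (y y' : Fin n → Y),
    (∀ j : Fin n, j.1 < n - d → y j = y' j) → qfun p x z e d y = qfun p x z e d y' := by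
  intro d
  induction d with
  | zero =>
    intro y y' hyy
    simp only [qfun]
    exact congrArg e (funext fun j => hyy j (by simp))
  | succ d ihd =>
    intro y y' hyy
    simp only [qfun]
    by_cases hd : d < n
    · rw [dif_pos hd, dif_pos hd]
      refine iSup_congr fun v => ?_
      refine Finset.sum_congr rfl fun cc _ => ?_
      have hpref : prefixOf y (⟨n - 1 - d, by omega⟩ : Fin n)
          = prefixOf y' (⟨n - 1 - d, by omega⟩ : Fin n) := by
        funext k
        have hk : k.1 < n - 1 - d := k.2
        exact hyy ⟨k.1, by omega⟩ (show k.1 < n - (d + 1) by omega)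
      rw [hpref, ihd (Function.update y ⟨n - 1 - d, by omega⟩ cc)
        (Function.update y' ⟨n - 1 - d, by omega⟩ cc) ?_]
      intro j hj
      by_cases hji : j = (⟨n - 1 - d, by omega⟩ : Fin n)
      · rw [hji]; simp
      · rw [Function.update_of_ne hji, Function.update_of_ne hji]
        refine hyy j ?_
        have hne : j.1 ≠ n - 1 - d := fun hc => hji (Fin.ext (by simpa using hc))
        omega
    · rw [dif_neg hd, dif_neg hd]
      exact ihd y y' fun j hj => hyy j (by omega)

lemma qfun_le (d : ℕ) (hd : d < n) (i : Fin n) (hi : i.1 = n - 1 - d) (v : V) (y : Fin n → Y) :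
    ∑ c : Y, p (x i) (z i (prefixOf y i)) v c * qfun p x z e d (Function.update y i c)
      ≤ qfun p x z e (d + 1) y := by
  have hnd : n - 1 - d < n :=
    (Nat.sub_le (n - 1) d).trans_lt (Nat.sub_lt (Nat.lt_of_le_of_lt (Nat.zero_le d) hd) Nat.one_pos)
  have hieq : i = (⟨n - 1 - d, hnd⟩ : Fin n) := Fin.ext (by simpa using hi)
  subst hieq
  simp only [qfun, dif_pos hd]
  exact le_ciSup (f := fun v : V => ∑ c : Y,
      p (x ⟨n - 1 - d, hnd⟩) (z ⟨n - 1 - d, hnd⟩ (prefixOf y ⟨n - 1 - d, hnd⟩)) v c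
        * qfun p x z e d (Function.update y ⟨n - 1 - d, hnd⟩ c))
    (Set.Finite.bddAbove (Set.finite_range _)) v

lemma qfun_exists_max [Nonempty V] (d : ℕ) (hd : d < n) (i : Fin n) (hi : i.1 = n - 1 - d)
    (y : Fin n → Y) :
    ∃ v : V, ∑ c : Y, p (x i) (z i (prefixOf y i)) v c * qfun p x z e d (Function.update y i c)
      = qfun p x z e (d + 1) y := by
  have hnd : n - 1 - d < n :=
    (Nat.sub_le (n - 1) d).trans_lt (Nat.sub_lt (Nat.lt_of_le_of_lt (Nat.zero_le d) hd) Nat.one_pos)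
  have hieq : i = (⟨n - 1 - d, hnd⟩ : Fin n) := Fin.ext (by simpa using hi)
  subst hieq
  obtain ⟨v0, hv0⟩ := Finite.exists_max fun v : V =>
    ∑ c : Y, p (x ⟨n - 1 - d, hnd⟩) (z ⟨n - 1 - d, hnd⟩ (prefixOf y ⟨n - 1 - d, hnd⟩)) v c
      * qfun p x z e d (Function.update y ⟨n - 1 - d, hnd⟩ c)
  refine ⟨v0, ?_⟩
  simp only [qfun, dif_pos hd]
  refine le_antisymm ?_ (ciSup_le hv0)
  exact le_ciSup (f := fun v : V => ∑ c : Y,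
      p (x ⟨n - 1 - d, hnd⟩) (z ⟨n - 1 - d, hnd⟩ (prefixOf y ⟨n - 1 - d, hnd⟩)) v c
        * qfun p x z e d (Function.update y ⟨n - 1 - d, hnd⟩ c))
    (Set.Finite.bddAbove (Set.finite_range _)) v0

end Q

def extSeq {n : ℕ} (y0 : Y) (i : Fin n) (pref : Fin i.1 → Y) : Fin n → Y :=
  fun j => if h : j.1 < i.1 then pref ⟨j.1, h⟩ else y0

lemma prefixOf_extSeq {n : ℕ} (y0 : Y) (i : Fin n) (pref : Fin i.1 → Y) :
    prefixOf (extSeq y0 i pref) i = pref := by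
  funext k
  show (if h : (⟨k.1, k.2.trans i.2⟩ : Fin n).1 < i.1 then pref ⟨k.1, h⟩ else y0) = pref k
  rw [dif_pos (show k.1 < i.1 from k.2)]

lemma extSeq_prefixOf_eq {n : ℕ} (y0 : Y) (y : Fin n → Y) (i j : Fin n) (hj : j.1 < i.1) :
    extSeq y0 i (prefixOf y i) j = y j := by
  simp only [extSeq]
  rw [dif_pos hj]
  simp [prefixOf]

lemma helper_le {Y : Type*} [Fintype Y] (P A : Y → ℝ) (B : ℝ)
    (h1 : ∑ c, P c = 1) (h2 : ∑ c, P c * A c ≤ B) : ∑ c, P c * (A c - B) ≤ 0 := by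
  have h3 : ∑ c, P c * (A c - B) = (∑ c, P c * A c) - (∑ c, P c) * B := by
    rw [Finset.sum_mul, ← Finset.sum_sub_distrib]
    exact Finset.sum_congr rfl fun c _ => by ring
  rw [h3, h1, one_mul]
  linarith

lemma helper_eq {Y : Type*} [Fintype Y] (P A : Y → ℝ) (B : ℝ)
    (h1 : ∑ c, P c = 1) (h2 : ∑ c, P c * A c = B) : ∑ c, P c * (A c - B) = 0 := by
  have h3 : ∑ c, P c * (A c - B) = (∑ c, P c * A c) - (∑ c, P c) * B := by
    rw [Finset.sum_mul, ← Finset.sum_sub_distrib]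
    exact Finset.sum_congr rfl fun c _ => by ring
  rw [h3, h1, one_mul, h2, sub_self]


end AVCFaux

open AVCFaux in
theorem avcf_game_iff_coding_scheme {X Z V Y : Type*}
    [Fintype X] [Fintype Z] [Fintype V] [Fintype Y]
    (p : X → Z → V → Y → ℝ)
    (hp0 : ∀ x z v y, 0 ≤ p x z v y) (hp1 : ∀ x z v, ∑ y, p x z v y = 1)
    (n L : ℕ) (hn : 0 < n) (hL : 0 < L) (ε : ℝ) (hε0 : 0 < ε) (hε1 : ε < 1) :
    GuaranteedWin
      (fun x => ⋃ z : Z, {a : Y → ℝ | ∀ v : V, ∑ y, p x z v y * a y ≤ 0}) n L ε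
    ↔ ∃ (x : Fin L → Fin n → X)
        (z : (i : Fin n) → Fin L → (Fin i.1 → Y) → Z)
        (dec : (Fin n → Y) → Fin L),
        ∀ (m : Fin L)
          (v : (i : Fin n) → Fin L → (Fin i.1 → Y) → (Fin (i.1 + 1) → Z) → V),
          ∑ y : Fin n → Y,
            (if dec y = m then 0 else
              ∏ i, p (x m i) (z i m (prefixOf y i))
                (v i m (prefixOf y i)
                  (fun j => z ⟨j.1, lt_of_le_of_lt (Nat.lt_succ_iff.mp j.2) i.2⟩ m
                    (fun k => y ⟨k.1, k.2.trans (lt_of_le_of_lt (Nat.lt_succ_iff.mp j.2) i.2)⟩)))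
                (y i)) ≤ ε := by
  classical
  by_cases hX : IsEmpty X
  · constructor
    · rintro ⟨x, -, -, -⟩
      exact (hX.false (x ⟨0, hL⟩ ⟨0, hn⟩)).elim
    · rintro ⟨x, -, -, -⟩
      exact (hX.false (x ⟨0, hL⟩ ⟨0, hn⟩)).elim
  by_cases hZ : IsEmpty Z
  · constructor
    · rintro ⟨x, w, dec, hmem, -⟩
      obtain ⟨z0, -⟩ := Set.mem_iUnion.1 (hmem ⟨0, hn⟩ ⟨0, hL⟩
        (fun k => absurd k.2 (Nat.not_lt_zero _)))
      exact (hZ.false z0).elim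
    · rintro ⟨x, z, dec, -⟩
      exact (hZ.false (z ⟨0, hn⟩ ⟨0, hL⟩ (fun k => absurd k.2 (Nat.not_lt_zero _)))).elim
  haveI : Nonempty X := not_isEmpty_iff.mp hX
  haveI : Nonempty Z := not_isEmpty_iff.mp hZ
  by_cases hV : IsEmpty V
  · refine iff_of_true
      ⟨fun _ _ => Classical.arbitrary X, fun _ _ _ _ => 1, fun _ => ⟨0, hL⟩,
        fun i m pref => Set.mem_iUnion.2 ⟨Classical.arbitrary Z, fun v => (hV.false v).elim⟩,
        fun m y => ?_⟩
      ⟨fun _ _ => Classical.arbitrary X, fun _ _ _ => Classical.arbitrary Z, fun _ => ⟨0, hL⟩,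
        fun m v => (hV.false (v ⟨0, hn⟩ m (fun k => absurd k.2 (Nat.not_lt_zero _))
          (fun _ => Classical.arbitrary Z))).elim⟩
    have h1 : (1 : ℝ) ≤ n := by exact_mod_cast hn
    simp only [Finset.sum_const, Finset.card_univ, Fintype.card_fin, nsmul_eq_mul, mul_one,
      ge_iff_le]
    split_ifs <;> linarith
  haveI : Nonempty V := not_isEmpty_iff.mp hV
  haveI hYne : Nonempty Y := by
    by_contra hY
    haveI : IsEmpty Y := not_nonempty_iff.mp hY
    have := hp1 (Classical.arbitrary X) (Classical.arbitrary Z) (Classical.arbitrary V)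
    rw [Finset.univ_eq_empty, Finset.sum_empty] at this
    norm_num at this
  obtain ⟨y0⟩ := hYne
  constructor
  · rintro ⟨x, w, dec, hmem, hwin⟩
    have hch : ∀ (i : Fin n) (m : Fin L) (pref : Fin i.1 → Y), ∃ zz : Z,
        ∀ v : V, ∑ c, p (x m i) zz v c * w i m pref c ≤ 0 := fun i m pref => by
      simpa [Set.mem_iUnion] using hmem i m pref
    choose zc hzc using hch
    refine ⟨x, fun i m pref => zc i m pref, dec, fun m v => ?_⟩
    set g : (i : Fin n) → (Fin i.1 → Y) → Y → ℝ := fun i pref cY =>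
      p (x m i) (zc i m pref)
        (v i m pref (fun j => zc ⟨j.1, lt_of_le_of_lt (Nat.lt_succ_iff.mp j.2) i.2⟩ m
          (fun k => pref ⟨k.1, k.2.trans_le (Nat.lt_succ_iff.mp j.2)⟩))) cY with hgdef
    have hkey : ∑ y : Fin n → Y,
        (∏ i, g i (prefixOf y i) (y i)) * (if dec y = m then (0:ℝ) else 1) ≤ ε := by
      refine lemA n g (fun i pref => w i m pref) (fun y => if dec y = m then (0:ℝ) else 1) ε
        (fun i pref cY => hp0 _ _ _ _) (fun i pref => hp1 _ _ _)
        (fun i pref => hzc i m pref _) (fun y => ?_)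
      have := hwin m y
      split_ifs at this ⊢ <;> linarith
    calc ∑ y : Fin n → Y,
          (if dec y = m then 0 else
            ∏ i, p (x m i) (zc i m (prefixOf y i))
              (v i m (prefixOf y i)
                (fun j => zc ⟨j.1, lt_of_le_of_lt (Nat.lt_succ_iff.mp j.2) i.2⟩ m
                  (fun k => y ⟨k.1, k.2.trans (lt_of_le_of_lt (Nat.lt_succ_iff.mp j.2) i.2)⟩)))
              (y i))
        = ∑ y : Fin n → Y, (∏ i, g i (prefixOf y i) (y i)) * (if dec y = m then (0:ℝ) else 1) := by
          refine Finset.sum_congr rfl fun y _ => ?_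
          by_cases hdm : dec y = m
          · simp [hdm]
          · rw [if_neg hdm, if_neg hdm, mul_one]
            exact Finset.prod_congr rfl fun i _ => rfl
      _ ≤ ε := hkey
  · rintro ⟨x, z, dec, hscheme⟩
    refine ⟨x, fun i m pref cY =>
        qfun p (x m) (fun i' pref' => z i' m pref') (fun yy => if dec yy = m then (0:ℝ) else 1)
          (n - 1 - i.1) (Function.update (extSeq y0 i pref) i cY)
        - qfun p (x m) (fun i' pref' => z i' m pref') (fun yy => if dec yy = m then (0:ℝ) else 1)
          (n - i.1) (extSeq y0 i pref),
      dec, fun i m pref => ?_, fun m y => ?_⟩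
    · -- membership in the cone
      refine Set.mem_iUnion.2 ⟨z i m pref, fun v => ?_⟩
      have hq := qfun_le p (x m) (fun i' pref' => z i' m pref')
        (fun yy => if dec yy = m then (0:ℝ) else 1) (n - 1 - i.1)
        (by have := i.2; omega) i (by have := i.2; omega) v (extSeq y0 i pref)
      rw [prefixOf_extSeq] at hq
      rw [show n - 1 - i.1 + 1 = n - i.1 by have := i.2; omega] at hq
      exact helper_le (fun c => p (x m i) (z i m pref) v c)
        (fun c => qfun p (x m) (fun i' pref' => z i' m pref')
          (fun yy => if dec yy = m then (0:ℝ) else 1)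
          (n - 1 - i.1) (Function.update (extSeq y0 i pref) i c))
        (qfun p (x m) (fun i' pref' => z i' m pref')
          (fun yy => if dec yy = m then (0:ℝ) else 1) (n - i.1) (extSeq y0 i pref))
        (hp1 _ _ _) hq
    · -- the winning inequality
      dsimp only
      set QQ : ℕ → (Fin n → Y) → ℝ := qfun p (x m) (fun i' pref' => z i' m pref')
        (fun yy => if dec yy = m then (0:ℝ) else 1) with hQQ
      have hterm : ∀ (y' : Fin n → Y) (i : Fin n),
          QQ (n - 1 - i.1) (Function.update (extSeq y0 i (prefixOf y' i)) i (y' i))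
              - QQ (n - i.1) (extSeq y0 i (prefixOf y' i))
            = QQ (n - 1 - i.1) y' - QQ (n - i.1) y' := by
        intro y' i
        have hi2 := i.2
        have h1 : QQ (n - 1 - i.1) (Function.update (extSeq y0 i (prefixOf y' i)) i (y' i))
            = QQ (n - 1 - i.1) y' := by
          refine qfun_congr _ _ _ _ _ _ _ (fun j hj => ?_)
          have hj' : j.1 ≤ i.1 := by omega
          by_cases hji : j = i
          · rw [hji, Function.update_self]
          · rw [Function.update_of_ne hji]
            have hlt : j.1 < i.1 := lt_of_le_of_ne hj' (fun hc => hji (Fin.ext hc))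
            exact extSeq_prefixOf_eq y0 y' i j hlt
        have h2 : QQ (n - i.1) (extSeq y0 i (prefixOf y' i)) = QQ (n - i.1) y' := by
          refine qfun_congr _ _ _ _ _ _ _ (fun j hj => ?_)
          have hlt : j.1 < i.1 := by omega
          exact extSeq_prefixOf_eq y0 y' i j hlt
        rw [h1, h2]
      have htel : ∀ y' : Fin n → Y,
          ∑ i : Fin n, (QQ (n - 1 - i.1) y' - QQ (n - i.1) y') = QQ 0 y' - QQ n y' := by
        intro y'
        have e1 : ∑ i : Fin n, (QQ (n - 1 - i.1) y' - QQ (n - i.1) y')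
            = ∑ k ∈ Finset.range n, (QQ (n - (k + 1)) y' - QQ (n - k) y') := by
          rw [← Fin.sum_univ_eq_sum_range (fun k => QQ (n - (k + 1)) y' - QQ (n - k) y') n]
          exact Finset.sum_congr rfl fun i _ => by
            rw [show n - 1 - (i : ℕ) = n - ((i : ℕ) + 1) from by omega]
        have e2 := Finset.sum_range_sub (fun k => QQ (n - k) y') n
        rw [e1, e2, Nat.sub_self, Nat.sub_zero]
      have hQ0 : ∀ y' : Fin n → Y, QQ 0 y' = (if dec y' = m then (0:ℝ) else 1) := by
        intro y'
        rw [hQQ]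
        simp only [qfun]
      have hQn : ∀ y' : Fin n → Y, QQ n y' = QQ n (fun _ => y0) := by
        intro y'
        exact qfun_congr _ _ _ _ _ _ _ (fun j hj => absurd hj (by omega))
      have hbound : QQ n (fun _ => y0) ≤ ε := by
        have hopt : ∀ (i : Fin n) (pref : Fin i.1 → Y), ∃ vv : V,
            ∑ c, p (x m i) (z i m pref) vv c
                * QQ (n - 1 - i.1) (Function.update (extSeq y0 i pref) i c)
              = QQ (n - i.1) (extSeq y0 i pref) := by
          intro i pref
          obtain ⟨vv, hvv⟩ := qfun_exists_max p (x m) (fun i' pref' => z i' m pref')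
            (fun yy => if dec yy = m then (0:ℝ) else 1) (n - 1 - i.1)
            (by have := i.2; omega) i (by have := i.2; omega) (extSeq y0 i pref)
          rw [prefixOf_extSeq, show n - 1 - i.1 + 1 = n - i.1 by have := i.2; omega] at hvv
          exact ⟨vv, hvv⟩
        choose vopt hvopt using hopt
        have hH := hscheme m (fun i _ pref _ => vopt i pref)
        have h1 : ∑ y' : Fin n → Y,
            (∏ i, p (x m i) (z i m (prefixOf y' i)) (vopt i (prefixOf y' i)) (y' i))
              * (if dec y' = m then (0:ℝ) else 1) ≤ ε := by
          refine le_trans (le_of_eq (Finset.sum_congr rfl fun y' _ => ?_)) hH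
          by_cases hdm : dec y' = m
          · simp [hdm]
          · rw [if_neg hdm, if_neg hdm, mul_one]
        have h2 : QQ n (fun _ => y0) ≤ ∑ y' : Fin n → Y,
            (∏ i, p (x m i) (z i m (prefixOf y' i)) (vopt i (prefixOf y' i)) (y' i))
              * (if dec y' = m then (0:ℝ) else 1) := by
          refine lemA' n (fun i pref cY => p (x m i) (z i m pref) (vopt i pref) cY)
            (fun i pref cY =>
              QQ (n - 1 - i.1) (Function.update (extSeq y0 i pref) i cY)
                - QQ (n - i.1) (extSeq y0 i pref))
            (fun y' => if dec y' = m then (0:ℝ) else 1) (QQ n (fun _ => y0))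
            (fun i pref cY => hp0 _ _ _ _) (fun i pref => hp1 _ _ _)
            (fun i pref => ?_) (fun y' => ?_)
          · refine ge_of_eq (helper_eq (fun c => p (x m i) (z i m pref) (vopt i pref) c)
              (fun c => QQ (n - 1 - i.1) (Function.update (extSeq y0 i pref) i c))
              (QQ (n - i.1) (extSeq y0 i pref)) (hp1 _ _ _) (hvopt i pref))
          · rw [Finset.sum_congr rfl (fun i _ => hterm y' i), htel y', hQ0 y', hQn y']
            simp
        linarith
      rw [Finset.sum_congr rfl (fun i _ => hterm y i), htel y, hQ0 y, hQn y]
      have h3 : (0:ℝ) ≤ (if dec y = m then (0:ℝ) else 1) := by split_ifs <;> norm_num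
      split_ifs <;> linarith

end
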